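/- Let Λ be the linear map on d×d complex matrices (d ≥ 2) defined on an orthonormal basis {|i⟩}_{i∈ℤ/dℤ} by Λ(H) := ∑_{i} ⟨i-1|H|i-1⟩ |i⟩⟨i| (indices mod d). If ρ is a density matrix and α ≥ 0 satisfies Λ(ρ) ≤ α·ρ (in the positive-semidefinite order), then ρ is strictly positive definite. -/

import Mathlib

open scoped ComplexOrder
open Matrix

theorem cyclic_shift_irreducible_condition
    {d : ℕ} [NeZero d] (hd : 2 ≤ d)
    (Λ : Matrix (Fin d) (Fin d) ℂ → Matrix (Fin d) (Fin d) ℂ)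
    (hΛ : ∀ H, Λ H = Matrix.of fun i j =>
      if i = j then H (i - 1) (i - 1) else 0)
    (ρ : Matrix (Fin d) (Fin d) ℂ) (hρ : ρ.PosSemidef) (hρtr : ρ.trace = 1)
    (α : ℝ) (hα : 0 ≤ α)
    (hle : ((α : ℂ) • ρ - Λ ρ).PosSemidef) :
    ρ.PosDef := by
  have hdiag : ∀ i, 0 ≤ ρ i i := fun i => by
    have := hρ.dotProduct_mulVec_nonneg (Pi.single i 1)
    simpa [dotProduct, Pi.single_apply, apply_ite, Finset.sum_ite_eq'] using this
  have hdiag' : ∀ i, 0 ≤ ((α : ℂ) • ρ - Λ ρ) i i := fun i => by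
    have := hle.dotProduct_mulVec_nonneg (Pi.single i 1)
    simpa [dotProduct, Pi.single_apply, apply_ite, Finset.sum_ite_eq'] using this
  -- if a diagonal entry vanishes, so does the previous one
  have hstep : ∀ i, ρ i i = 0 → ρ (i - 1) (i - 1) = 0 := by
    intro i h
    have h2 := hdiag' i
    rw [hΛ] at h2
    simp only [Matrix.sub_apply, Matrix.smul_apply, Matrix.of_apply, if_pos rfl, h,
      smul_zero, zero_sub] at h2
    have h3 : ρ (i - 1) (i - 1) ≤ 0 := by
      have := neg_nonneg.mp h2
      exact this
    exact le_antisymm h3 (hdiag _)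
  -- all diagonal entries are nonzero
  open Fin.NatCast Fin.CommRing in
  have hall : ∀ i, ρ i i ≠ 0 := by
    by_contra hcon
    push_neg at hcon
    obtain ⟨j, hj⟩ := hcon
    have key : ∀ k : ℕ, ρ (j - (k : Fin d)) (j - (k : Fin d)) = 0 := by
      intro k
      induction k with
      | zero => simpa using hj
      | succ n ih =>
        have := hstep _ ih
        have he : j - ((n : Fin d) + 1) = j - (n : Fin d) - 1 := by ring
        rw [show ((n + 1 : ℕ) : Fin d) = (n : Fin d) + 1 by push_cast; ring, he]
        exact this
    have htr0 : ρ.trace = 0 := by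
      rw [Matrix.trace]
      apply Finset.sum_eq_zero
      intro i _
      have := key ((j - i : Fin d).val)
      rwa [Fin.cast_val_eq_self, sub_sub_cancel] at this
    rw [htr0] at hρtr
    exact zero_ne_one hρtr
  refine Matrix.PosDef.of_dotProduct_mulVec_pos hρ.1 (fun x hx => ?_)
  rcases lt_or_eq_of_le (hρ.dotProduct_mulVec_nonneg x) with h | h
  · exact h
  · exfalso
    have hx0 : ρ *ᵥ x = 0 := (hρ.dotProduct_mulVec_zero_iff x).mp h.symm
    have h2 := hle.dotProduct_mulVec_nonneg x
    rw [Matrix.sub_mulVec, Matrix.smul_mulVec, hx0, smul_zero, zero_sub,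
      dotProduct_neg] at h2
    have hle0 : star x ⬝ᵥ (Λ ρ *ᵥ x) ≤ 0 := neg_nonneg.mp h2
    have hmv : ∀ i, (Λ ρ *ᵥ x) i = ρ (i - 1) (i - 1) * x i := by
      intro i
      rw [hΛ]
      simp [Matrix.mulVec, dotProduct, ite_mul]
    have hterm : star x ⬝ᵥ (Λ ρ *ᵥ x) =
        ∑ i, ρ (i - 1) (i - 1) * (star (x i) * x i) := by
      rw [dotProduct]
      apply Finset.sum_congr rfl
      intro i _
      rw [hmv i, Pi.star_apply]
      ring
    have hnn : ∀ i ∈ Finset.univ, (0 : ℂ) ≤ ρ (i - 1) (i - 1) * (star (x i) * x i) :=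
      fun i _ => mul_nonneg (hdiag _) (star_mul_self_nonneg _)
    have hsum0 : ∑ i, ρ (i - 1) (i - 1) * (star (x i) * x i) = 0 :=
      le_antisymm (hterm ▸ hle0) (Finset.sum_nonneg hnn)
    have hzero := (Finset.sum_eq_zero_iff_of_nonneg hnn).mp hsum0
    apply hx
    funext i
    have h3 := hzero i (Finset.mem_univ i)
    have hx2 : star (x i) * x i = 0 := by
      rcases mul_eq_zero.mp h3 with h' | h'
      · exact absurd h' (hall _)
      · exact h'
    have hns : (Complex.normSq (x i) : ℂ) = 0 := by
      rw [Complex.normSq_eq_conj_mul_self]; exact hx2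
    have : Complex.normSq (x i) = 0 := by exact_mod_cast hns
    simpa using Complex.normSq_eq_zero.mp this
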